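/- Let X be a strictly convex smooth 2-dimensional Banach space with natural parameterization r : ℝ → S_X, and let a, b, s ∈ ℝ satisfy 0 ≠ r(b) - r(a) = ‖r(b)-r(a)‖·r(s). If r is twice differentiable at both b and s, then the function ν : ℝ → ℝ, ν(ε) = ‖r(b+ε) - r(a)‖, is twice differentiable at 0, with ν'(0) equal to the r(s)-coordinate of r'(b) in the basis (r(s), r'(s)). -/

import Mathlib

open Metric Set Function Module Asymptotics Filter

/-- `f` is twice differentiable at `s` with first derivative `d1` and second
derivative `d2`: `f(s+ε) = f(s) + d1·ε + ½·d2·ε² + o(ε²)`. -/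
def HasSecondDerivAt' {X : Type*} [NormedAddCommGroup X] [NormedSpace ℝ X]
    (f : ℝ → X) (s : ℝ) (d1 d2 : X) : Prop :=
  (fun ε : ℝ => f (s + ε) - f s - ε • d1 - (ε ^ 2 / 2) • d2) =o[nhds (0 : ℝ)]
    fun ε : ℝ => ε ^ 2

theorem nu_twice_differentiable
    (X : Type*) [NormedAddCommGroup X] [NormedSpace ℝ X] [StrictConvexSpace ℝ X]
    (hdim : finrank ℝ X = 2)
    (hsmooth : ∀ x : X, x ≠ 0 → DifferentiableAt ℝ (fun y : X => ‖y‖) x)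
    (r : ℝ → X) (hr : ContDiff ℝ 1 r)
    (hr1 : ∀ t, ‖r t‖ = 1) (hdr : ∀ t, ‖deriv r t‖ = 1)
    (a b s : ℝ)
    (hne : r b - r a ≠ 0)
    (hdir : r b - r a = ‖r b - r a‖ • r s)
    (hb2 : ∃ d : X, HasSecondDerivAt' r b (deriv r b) d)
    (hs2 : ∃ d : X, HasSecondDerivAt' r s (deriv r s) d) :
    ∀ x y : ℝ, deriv r b = x • r s + y • deriv r s →
      ∃ d2 : ℝ, HasSecondDerivAt' (fun ε : ℝ => ‖r (b + ε) - r a‖) 0 x d2 := by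
  intro x y hxy
  obtain ⟨db, hdb⟩ := hb2
  obtain ⟨ds, hds⟩ := hs2
  have hrdiff : Differentiable ℝ r := hr.differentiable one_ne_zero
  have hc : (0:ℝ) < ‖r b - r a‖ := norm_pos_iff.mpr hne
  set c : ℝ := ‖r b - r a‖ with hcdef
  have hrs_ne : r s ≠ 0 := by
    intro h
    have := hr1 s
    rw [h, norm_zero] at this
    norm_num at this
  -- the supporting functional
  have hN : DifferentiableAt ℝ (fun v : X => ‖v‖) (r s) := hsmooth _ hrs_ne
  set F := fderiv ℝ (fun v : X => ‖v‖) (r s) with hFdef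
  have hFs : HasFDerivAt (fun v : X => ‖v‖) F (r s) := hN.hasFDerivAt
  have hF2 : F (deriv r s) = 0 := by
    have h1 : HasDerivAt ((fun v : X => ‖v‖) ∘ r) (F (deriv r s)) s :=
      hFs.comp_hasDerivAt s (hrdiff s).hasDerivAt
    have h2 : ((fun v : X => ‖v‖) ∘ r) = fun _ : ℝ => (1:ℝ) := funext fun t => hr1 t
    have h3 : HasDerivAt ((fun v : X => ‖v‖) ∘ r) 0 s := by
      rw [h2]; exact hasDerivAt_const _ _
    exact h1.unique h3
  have hF1 : F (r s) = 1 := by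
    have hg : HasDerivAt (fun t : ℝ => (1 + t) • r s) (r s) 0 := by
      have h0 : HasDerivAt (fun t : ℝ => 1 + t) 1 0 := by
        simpa using (hasDerivAt_id (0:ℝ)).const_add 1
      simpa using h0.smul_const (r s)
    have hg0 : ((1:ℝ) + 0) • r s = r s := by norm_num
    have h1 : HasDerivAt ((fun v : X => ‖v‖) ∘ fun t : ℝ => (1 + t) • r s) (F (r s)) 0 := by
      refine HasFDerivAt.comp_hasDerivAt 0 ?_ hg
      rw [hg0]; exact hFs
    have heq : ((fun v : X => ‖v‖) ∘ fun t : ℝ => (1 + t) • r s) =ᶠ[nhds (0:ℝ)]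
        fun t => 1 + t := by
      filter_upwards [eventually_gt_nhds (by norm_num : (-1:ℝ) < 0)] with t ht
      simp only [Function.comp]
      rw [norm_smul, hr1, mul_one, Real.norm_eq_abs, abs_of_pos (by linarith)]
    have h2 : HasDerivAt ((fun v : X => ‖v‖) ∘ fun t : ℝ => (1 + t) • r s) 1 0 := by
      have h0 : HasDerivAt (fun t : ℝ => 1 + t) 1 0 := by
        simpa using (hasDerivAt_id (0:ℝ)).const_add 1
      exact h0.congr_of_eventuallyEq heq
    exact h1.unique h2
  -- linear independence and span
  have hind : LinearIndependent ℝ ![r s, deriv r s] := by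
    rw [linearIndependent_fin2]
    constructor
    · simp only [Matrix.cons_val_one, Matrix.head_cons, Matrix.cons_val_zero]
      intro h
      have := hdr s
      rw [h, norm_zero] at this
      norm_num at this
    · intro t ht
      simp only [Matrix.cons_val_zero, Matrix.cons_val_one, Matrix.head_cons] at ht
      have h := congrArg F ht
      rw [map_smul, hF2, hF1, smul_eq_mul, mul_zero] at h
      norm_num at h
  have hspan : ∀ v : X, ∃ p q : ℝ, v = p • r s + q • deriv r s := by
    intro v
    have hcard : Fintype.card (Fin 2) = finrank ℝ X := by simp [hdim]
    set B := basisOfLinearIndependentOfCardEqFinrank hind hcard with hBdef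
    have hB : ⇑B = ![r s, deriv r s] := coe_basisOfLinearIndependentOfCardEqFinrank hind hcard
    have h := B.sum_repr v
    rw [Fin.sum_univ_two, hB] at h
    simp only [Matrix.cons_val_zero, Matrix.cons_val_one, Matrix.head_cons] at h
    exact ⟨_, _, h.symm⟩
  obtain ⟨pb, qb, hpbqb⟩ := hspan db
  obtain ⟨ps, qs, hpsqs⟩ := hspan ds
  -- the coefficients
  set δ1 : ℝ := y / c with hδ1
  set l2 : ℝ := pb/2 - y^2*ps/(2*c) with hl2
  set δ2 : ℝ := (qb/2 - x*δ1 - c*δ1^2*qs/2)/c with hδ2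
  refine ⟨2*l2, ?_⟩
  have hdb' : (fun ε : ℝ => r (b+ε) - r b - ε • deriv r b - (ε^2/2) • db)
      =o[nhds (0:ℝ)] fun ε => ε^2 := hdb
  have hds' : (fun d : ℝ => r (s+d) - r s - d • deriv r s - (d^2/2) • ds)
      =o[nhds (0:ℝ)] fun d => d^2 := hds
  have hra : r a = r b - c • r s := by rw [← hdir]; abel
  -- key algebraic identity
  have hkey : ∀ ε : ℝ,
      r (b+ε) - r a - (c + x*ε + l2*ε^2) • r (s + (δ1*ε + δ2*ε^2)) =
      (r (b+ε) - r b - ε • deriv r b - (ε^2/2) • db)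
        - (c + x*ε + l2*ε^2) • (r (s + (δ1*ε + δ2*ε^2)) - r s - (δ1*ε + δ2*ε^2) • deriv r s
            - ((δ1*ε + δ2*ε^2)^2/2) • ds)
        + (c + x*ε + pb/2*ε^2 - (c + x*ε + l2*ε^2)*(1 + ps/2*(δ1*ε + δ2*ε^2)^2)) • r s
        + (y*ε + qb/2*ε^2 - (c + x*ε + l2*ε^2)*((δ1*ε + δ2*ε^2) + qs/2*(δ1*ε + δ2*ε^2)^2))
            • deriv r s := by
    intro ε
    rw [hra, hxy, hpbqb, hpsqs]
    match_scalars <;> ring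
  -- composed little-o for the s-expansion
  have hdtend : Tendsto (fun ε : ℝ => δ1*ε + δ2*ε^2) (nhds 0) (nhds 0) := by
    have hcont : Continuous fun ε : ℝ => δ1*ε + δ2*ε^2 := by fun_prop
    have := hcont.tendsto 0
    simpa using this
  have hδO : (fun ε : ℝ => δ1*ε + δ2*ε^2) =O[nhds (0:ℝ)] fun ε => ε := by
    have h1 : Tendsto (fun ε : ℝ => δ1 + δ2*ε) (nhds 0) (nhds (δ1 + δ2*0)) :=
      (by fun_prop : Continuous fun ε : ℝ => δ1 + δ2*ε).tendsto 0
    have h2 := (isBigO_refl (fun ε : ℝ => ε) (nhds 0)).mul (h1.isBigO_one ℝ)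
    have h3 : (fun ε : ℝ => δ1*ε + δ2*ε^2) = fun ε => ε * (δ1 + δ2*ε) := by
      funext ε; ring
    rw [h3]; simpa using h2
  have hδ2O : (fun ε : ℝ => (δ1*ε + δ2*ε^2)^2) =O[nhds (0:ℝ)] fun ε => ε^2 := by
    have := hδO.mul hδO
    simpa [pow_two] using this
  have hEs2 : (fun ε : ℝ => r (s + (δ1*ε + δ2*ε^2)) - r s - (δ1*ε + δ2*ε^2) • deriv r s
      - ((δ1*ε + δ2*ε^2)^2/2) • ds) =o[nhds (0:ℝ)] fun ε => ε^2 :=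
    (hds'.comp_tendsto hdtend).trans_isBigO hδ2O
  have hlamO : (fun ε : ℝ => c + x*ε + l2*ε^2) =O[nhds (0:ℝ)] fun _ => (1:ℝ) :=
    ((by fun_prop : Continuous fun ε : ℝ => c + x*ε + l2*ε^2).tendsto 0).isBigO_one ℝ
  have hterm2 : (fun ε : ℝ => (c + x*ε + l2*ε^2) • (r (s + (δ1*ε + δ2*ε^2)) - r s
      - (δ1*ε + δ2*ε^2) • deriv r s - ((δ1*ε + δ2*ε^2)^2/2) • ds))
      =o[nhds (0:ℝ)] fun ε => ε^2 := by
    have := hlamO.smul_isLittleO hEs2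
    simpa using this
  -- the scalar polynomial terms
  have hrsO : (fun _ : ℝ => r s) =O[nhds (0:ℝ)] fun _ => (1:ℝ) :=
    isBigO_const_const _ one_ne_zero _
  have hrs'O : (fun _ : ℝ => deriv r s) =O[nhds (0:ℝ)] fun _ => (1:ℝ) :=
    isBigO_const_const _ one_ne_zero _
  have hP : (fun ε : ℝ => c + x*ε + pb/2*ε^2
      - (c + x*ε + l2*ε^2)*(1 + ps/2*(δ1*ε + δ2*ε^2)^2)) =o[nhds (0:ℝ)] fun ε => ε^2 := by
    have hPS : ∀ ε : ℝ, c + x*ε + pb/2*ε^2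
        - (c + x*ε + l2*ε^2)*(1 + ps/2*(δ1*ε + δ2*ε^2)^2)
        = ε^2 * ((pb/2 - l2 - ps/2*c*δ1^2)
          + (-(ps/2)*(2*c*δ1*δ2 + x*δ1^2))*ε
          + (-(ps/2)*(c*δ2^2 + 2*x*δ1*δ2 + l2*δ1^2))*ε^2
          + (-(ps/2)*(x*δ2^2 + 2*l2*δ1*δ2))*ε^3
          + (-(ps/2)*(l2*δ2^2))*ε^4) := by
      intro ε; ring
    have hA2 : pb/2 - l2 - ps/2*c*δ1^2 = 0 := by
      rw [hl2, hδ1]; field_simp; ring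
    have hS0 : Tendsto (fun ε : ℝ => (pb/2 - l2 - ps/2*c*δ1^2)
          + (-(ps/2)*(2*c*δ1*δ2 + x*δ1^2))*ε
          + (-(ps/2)*(c*δ2^2 + 2*x*δ1*δ2 + l2*δ1^2))*ε^2
          + (-(ps/2)*(x*δ2^2 + 2*l2*δ1*δ2))*ε^3
          + (-(ps/2)*(l2*δ2^2))*ε^4) (nhds 0) (nhds 0) := by
      have hcont : Continuous fun ε : ℝ => (pb/2 - l2 - ps/2*c*δ1^2)
          + (-(ps/2)*(2*c*δ1*δ2 + x*δ1^2))*ε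
          + (-(ps/2)*(c*δ2^2 + 2*x*δ1*δ2 + l2*δ1^2))*ε^2
          + (-(ps/2)*(x*δ2^2 + 2*l2*δ1*δ2))*ε^3
          + (-(ps/2)*(l2*δ2^2))*ε^4 := by fun_prop
      have := hcont.tendsto 0
      simpa [hA2] using this
    have h1 := (isBigO_refl (fun ε : ℝ => ε^2) (nhds 0)).mul_isLittleO
      ((isLittleO_one_iff ℝ).mpr hS0)
    have h2 : (fun ε : ℝ => c + x*ε + pb/2*ε^2
        - (c + x*ε + l2*ε^2)*(1 + ps/2*(δ1*ε + δ2*ε^2)^2)) =o[nhds (0:ℝ)]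
        fun ε => ε^2 * 1 := by
      refine h1.congr_left ?_
      intro ε
      exact (hPS ε).symm
    simpa using h2
  have hQ : (fun ε : ℝ => y*ε + qb/2*ε^2
      - (c + x*ε + l2*ε^2)*((δ1*ε + δ2*ε^2) + qs/2*(δ1*ε + δ2*ε^2)^2))
      =o[nhds (0:ℝ)] fun ε => ε^2 := by
    have hB1 : y - c*δ1 = 0 := by rw [hδ1]; field_simp; ring
    have hB2 : qb/2 - (c*δ2 + x*δ1) - qs/2*c*δ1^2 = 0 := by
      rw [hδ2]; field_simp; ring
    have hQS : ∀ ε : ℝ, y*ε + qb/2*ε^2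
        - (c + x*ε + l2*ε^2)*((δ1*ε + δ2*ε^2) + qs/2*(δ1*ε + δ2*ε^2)^2)
        = (y - c*δ1)*ε + ε^2 * ((qb/2 - (c*δ2 + x*δ1) - qs/2*c*δ1^2)
          + (-(x*δ2 + l2*δ1) - (qs/2)*(2*c*δ1*δ2 + x*δ1^2))*ε
          + (-(l2*δ2) - (qs/2)*(c*δ2^2 + 2*x*δ1*δ2 + l2*δ1^2))*ε^2
          + (-(qs/2)*(x*δ2^2 + 2*l2*δ1*δ2))*ε^3
          + (-(qs/2)*(l2*δ2^2))*ε^4) := by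
      intro ε; ring
    have hS0 : Tendsto (fun ε : ℝ => (qb/2 - (c*δ2 + x*δ1) - qs/2*c*δ1^2)
          + (-(x*δ2 + l2*δ1) - (qs/2)*(2*c*δ1*δ2 + x*δ1^2))*ε
          + (-(l2*δ2) - (qs/2)*(c*δ2^2 + 2*x*δ1*δ2 + l2*δ1^2))*ε^2
          + (-(qs/2)*(x*δ2^2 + 2*l2*δ1*δ2))*ε^3
          + (-(qs/2)*(l2*δ2^2))*ε^4) (nhds 0) (nhds 0) := by
      have hcont : Continuous fun ε : ℝ => (qb/2 - (c*δ2 + x*δ1) - qs/2*c*δ1^2)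
          + (-(x*δ2 + l2*δ1) - (qs/2)*(2*c*δ1*δ2 + x*δ1^2))*ε
          + (-(l2*δ2) - (qs/2)*(c*δ2^2 + 2*x*δ1*δ2 + l2*δ1^2))*ε^2
          + (-(qs/2)*(x*δ2^2 + 2*l2*δ1*δ2))*ε^3
          + (-(qs/2)*(l2*δ2^2))*ε^4 := by fun_prop
      have := hcont.tendsto 0
      simpa [hB2] using this
    have h1 := (isBigO_refl (fun ε : ℝ => ε^2) (nhds 0)).mul_isLittleO
      ((isLittleO_one_iff ℝ).mpr hS0)
    have h2 : (fun ε : ℝ => y*ε + qb/2*ε^2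
        - (c + x*ε + l2*ε^2)*((δ1*ε + δ2*ε^2) + qs/2*(δ1*ε + δ2*ε^2)^2))
        =o[nhds (0:ℝ)] fun ε => ε^2 * 1 := by
      refine h1.congr_left ?_
      intro ε
      rw [hQS ε, hB1]
      ring
    simpa using h2
  have hPv : (fun ε : ℝ => (c + x*ε + pb/2*ε^2
      - (c + x*ε + l2*ε^2)*(1 + ps/2*(δ1*ε + δ2*ε^2)^2)) • r s)
      =o[nhds (0:ℝ)] fun ε => ε^2 := by
    have := hP.smul_isBigO hrsO
    simpa using this
  have hQv : (fun ε : ℝ => (y*ε + qb/2*ε^2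
      - (c + x*ε + l2*ε^2)*((δ1*ε + δ2*ε^2) + qs/2*(δ1*ε + δ2*ε^2)^2)) • deriv r s)
      =o[nhds (0:ℝ)] fun ε => ε^2 := by
    have := hQ.smul_isBigO hrs'O
    simpa using this
  have claimA : (fun ε : ℝ => r (b+ε) - r a - (c + x*ε + l2*ε^2) • r (s + (δ1*ε + δ2*ε^2)))
      =o[nhds (0:ℝ)] fun ε => ε^2 := by
    have h := ((hdb'.sub hterm2).add hPv).add hQv
    exact h.congr_left fun ε => (hkey ε).symm
  have hlam_pos : ∀ᶠ ε in nhds (0:ℝ), 0 < c + x*ε + l2*ε^2 := by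
    have ht : Tendsto (fun ε : ℝ => c + x*ε + l2*ε^2) (nhds 0) (nhds (c + x*0 + l2*0^2)) :=
      (by fun_prop : Continuous fun ε : ℝ => c + x*ε + l2*ε^2).tendsto 0
    have h0 : (0:ℝ) < c + x*0 + l2*0^2 := by simpa using hc
    exact ht.eventually (eventually_gt_nhds h0)
  have hbound : (fun ε : ℝ => ‖r (b+ε) - r a‖ - (c + x*ε + l2*ε^2)) =O[nhds (0:ℝ)]
      (fun ε => r (b+ε) - r a - (c + x*ε + l2*ε^2) • r (s + (δ1*ε + δ2*ε^2))) := by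
    rw [isBigO_iff]
    refine ⟨1, ?_⟩
    filter_upwards [hlam_pos] with ε hε
    rw [one_mul, Real.norm_eq_abs]
    have h1 : ‖(c + x*ε + l2*ε^2) • r (s + (δ1*ε + δ2*ε^2))‖ = c + x*ε + l2*ε^2 := by
      rw [norm_smul, hr1, mul_one, Real.norm_eq_abs, abs_of_pos hε]
    calc |‖r (b+ε) - r a‖ - (c + x*ε + l2*ε^2)|
        = |‖r (b+ε) - r a‖ - ‖(c + x*ε + l2*ε^2) • r (s + (δ1*ε + δ2*ε^2))‖| := by rw [h1]
      _ ≤ ‖r (b+ε) - r a - (c + x*ε + l2*ε^2) • r (s + (δ1*ε + δ2*ε^2))‖ :=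
          abs_norm_sub_norm_le _ _
  have final := hbound.trans_isLittleO claimA
  have hfun : (fun ε : ℝ => ‖r (b + (0+ε)) - r a‖ - ‖r (b+0) - r a‖ - ε • x - (ε^2/2) • (2*l2))
      = fun ε : ℝ => ‖r (b+ε) - r a‖ - (c + x*ε + l2*ε^2) := by
    funext ε
    have he : b + (0+ε) = b + ε := by ring
    have hb0 : b + 0 = b := by ring
    rw [he, hb0, smul_eq_mul, smul_eq_mul, ← hcdef]
    ring
  show (fun ε : ℝ => ‖r (b + (0+ε)) - r a‖ - ‖r (b+0) - r a‖ - ε • x - (ε^2/2) • (2*l2))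
      =o[nhds (0:ℝ)] fun ε => ε^2
  rw [hfun]
  exact final
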